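/- Variational form of the η-quasi-norm: for η ∈ (0,2) and any nonnegative reals a_1,…,a_m not all zero, setting β = η/(2−η), one has ||a||_η = min over z ∈ R^m_{>0} of (1/2)(∑_i a_i^2 / z_i + ||z||_β), and the minimum is attained at z_i = a_i^{2−η} ||a||_η^{η−1}. -/

import Mathlib

open Real Finset

theorem eta_quasinorm_variational_form
    (m : ℕ) (η : ℝ) (hη : η ∈ Set.Ioo (0 : ℝ) 2)
    (a : Fin m → ℝ) (ha : ∀ i, 0 ≤ a i) (ha0 : a ≠ 0) :
    (fun z : Fin m → ℝ =>
        (1 / 2) * (∑ i, (a i) ^ 2 / z i + (∑ i, z i ^ (η / (2 - η))) ^ ((2 - η) / η)))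
      (fun i => a i ^ (2 - η) * ((∑ i, a i ^ η) ^ (1 / η)) ^ (η - 1)) =
      (∑ i, a i ^ η) ^ (1 / η) ∧
    ∀ z : Fin m → ℝ, (∀ i, 0 < z i) →
      (∑ i, a i ^ η) ^ (1 / η) ≤
        (1 / 2) * (∑ i, (a i) ^ 2 / z i + (∑ i, z i ^ (η / (2 - η))) ^ ((2 - η) / η)) := by
  obtain ⟨hη0, hη2⟩ := hη
  have h2η : (0:ℝ) < 2 - η := by linarith
  have hj : ∃ j, 0 < a j := by
    by_contra h
    push_neg at h
    exact ha0 (funext fun i => le_antisymm (h i) (ha i))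
  obtain ⟨j, hj⟩ := hj
  set S := ∑ i, a i ^ η with hS_def
  have hS : 0 < S :=
    Finset.sum_pos' (fun i _ => rpow_nonneg (ha i) η)
      ⟨j, Finset.mem_univ j, rpow_pos_of_pos hj η⟩
  set N := S ^ (1/η) with hN_def
  have hN : 0 < N := rpow_pos_of_pos hS _
  have hNη : N ^ η = S := by
    rw [hN_def, ← rpow_mul hS.le, one_div_mul_cancel (ne_of_gt hη0), rpow_one]
  have hNnat : ∀ r : ℝ, N ^ r = N ^ r := fun _ => rfl
  constructor
  · -- Part 1: value at the minimizer
    simp only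
    have h1 : ∑ i, (a i) ^ 2 / (a i ^ (2 - η) * N ^ (η - 1)) = N := by
      have : ∀ i, (a i) ^ 2 / (a i ^ (2 - η) * N ^ (η - 1)) = a i ^ η * N ^ (1 - η) := by
        intro i
        rcases eq_or_lt_of_le (ha i) with h0 | hpos
        · rw [← h0, zero_rpow (ne_of_gt hη0), zero_rpow (ne_of_gt h2η)]
          simp
        · rw [div_mul_eq_div_div, show (a i) ^ 2 = a i ^ (2:ℝ) by
            rw [← rpow_natCast (a i) 2]; norm_num,
            ← rpow_sub hpos, show (2:ℝ) - (2 - η) = η by ring,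
            div_eq_mul_inv, ← rpow_neg hN.le, show -(η - 1) = 1 - η by ring]
      rw [Finset.sum_congr rfl (fun i _ => this i), ← Finset.sum_mul, ← hS_def, ← hNη,
        ← rpow_add hN]
      norm_num
    have h2 : (∑ i, (a i ^ (2 - η) * N ^ (η - 1)) ^ (η / (2 - η))) ^ ((2 - η) / η) = N := by
      have hterm : ∀ i, (a i ^ (2 - η) * N ^ (η - 1)) ^ (η / (2 - η))
          = a i ^ η * N ^ ((η - 1) * (η / (2 - η))) := by
        intro i
        rw [mul_rpow (rpow_nonneg (ha i) _) (rpow_nonneg hN.le _),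
          ← rpow_mul (ha i), ← rpow_mul hN.le,
          mul_div_cancel₀ η (ne_of_gt h2η)]
      rw [Finset.sum_congr rfl (fun i _ => hterm i), ← Finset.sum_mul, ← hS_def, ← hNη,
        ← rpow_add hN, ← rpow_mul hN.le]
      have : (η + (η - 1) * (η / (2 - η))) * ((2 - η) / η) = 1 := by
        field_simp
        ring
      rw [this, rpow_one]
    rw [h1, h2]; ring
  · -- Part 2: the inequality
    intro z hz
    set β := η / (2 - η) with hβ_def
    set A := ∑ i, (a i) ^ 2 / z i with hA_def
    set T := ∑ i, z i ^ β with hT_def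
    have hA : 0 ≤ A :=
      Finset.sum_nonneg fun i _ => div_nonneg (sq_nonneg _) (hz i).le
    have hT : 0 < T :=
      Finset.sum_pos (fun i _ => rpow_pos_of_pos (hz i) β) ⟨j, Finset.mem_univ j⟩
    set Sz := T ^ ((2 - η) / η) with hSz_def
    have hSz : 0 < Sz := rpow_pos_of_pos hT _
    -- Hölder inequality
    have hpq : (2/η).HolderConjugate (2/(2-η)) := by
      constructor
      · rw [inv_div, inv_div, inv_one]; ring
      · exact div_pos two_pos hη0
      · exact div_pos two_pos h2η
    have holder := Real.inner_le_Lp_mul_Lq_of_nonneg (Finset.univ : Finset (Fin m))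
      hpq (f := fun i => ((a i) ^ 2 / z i) ^ (η/2)) (g := fun i => (z i) ^ (η/2))
      (fun i _ => rpow_nonneg (div_nonneg (sq_nonneg _) (hz i).le) _)
      (fun i _ => rpow_nonneg (hz i).le _)
    have hfg : ∀ i, ((a i) ^ 2 / z i) ^ (η/2) * (z i) ^ (η/2) = a i ^ η := by
      intro i
      rw [← mul_rpow (div_nonneg (sq_nonneg _) (hz i).le) (hz i).le,
        div_mul_cancel₀ _ (ne_of_gt (hz i)),
        show (a i) ^ 2 = a i ^ (2:ℝ) by rw [← rpow_natCast (a i) 2]; norm_num,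
        ← rpow_mul (ha i)]
      congr 1; ring
    have hf2 : ∀ i, (((a i) ^ 2 / z i) ^ (η/2)) ^ (2/η) = (a i) ^ 2 / z i := by
      intro i
      rw [← rpow_mul (div_nonneg (sq_nonneg _) (hz i).le),
        show η/2 * (2/η) = 1 by field_simp, rpow_one]
    have hg2 : ∀ i, ((z i) ^ (η/2)) ^ (2/(2-η)) = z i ^ β := by
      intro i
      rw [← rpow_mul (hz i).le, hβ_def]
      congr 1
      field_simp
    rw [Finset.sum_congr rfl (fun i _ => hfg i),
      Finset.sum_congr rfl (fun i _ => hf2 i),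
      Finset.sum_congr rfl (fun i _ => hg2 i), ← hS_def, ← hA_def, ← hT_def] at holder
    -- holder : S ≤ A ^ (1/(2/η)) * T ^ (1/(2/(2-η)))
    rw [one_div_div, one_div_div] at holder
    -- T ^ ((2-η)/2) = Sz ^ (η/2)
    have hTSz : T ^ ((2-η)/2) = Sz ^ (η/2) := by
      rw [hSz_def, ← rpow_mul hT.le]
      congr 1
      field_simp
    rw [hTSz] at holder
    have hkey : N ^ 2 ≤ A * Sz := by
      have h1 : N ^ η ≤ (A * Sz) ^ (η/2) := by
        rw [hNη, mul_rpow hA hSz.le]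
        exact holder
      have h2 := rpow_le_rpow (rpow_nonneg hN.le η) h1 (le_of_lt (by positivity : (0:ℝ) < 2/η))
      rw [← rpow_mul hN.le, ← rpow_mul (mul_nonneg hA hSz.le),
        show η * (2/η) = 2 by field_simp, show η/2 * (2/η) = 1 by field_simp,
        rpow_one] at h2
      calc N ^ 2 = N ^ (2:ℝ) := by rw [← rpow_natCast N 2]; norm_num
        _ ≤ A * Sz := h2
    nlinarith [sq_nonneg (N - Sz), hSz, hkey]
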